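/- Let μ > 0 and n ∈ ℕ, and let T(n) be the n×n tridiagonal matrix with diagonal entries T_{jj} = 2j, subdiagonal entries μ, and superdiagonal entries −μ. Then T(n) is invertible and its inverse is given by (T(n)^{-1})_{ij} = μ^{j−i} (d_{j+1}⋯d_n)/(δ_i⋯δ_n) for i ≤ j and (T(n)^{-1})_{ij} = (−1)^{i+j} μ^{i−j} (d_{i+1}⋯d_n)/(δ_j⋯δ_n) for i > j, where δ_1 = 2, δ_j = 2j + μ²/δ_{j−1}, d_n = 2n, d_j = 2j + μ²/d_{j+1}. -/

import Mathlib

theorem stmt_9 (μ : ℝ) (hμ : 0 < μ) (n : ℕ)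
    (T : Matrix (Fin n) (Fin n) ℝ)
    (hT : ∀ i j : Fin n, T i j =
      if (i : ℕ) = j then (2 * ((j : ℕ) + 1) : ℝ)
      else if (i : ℕ) = (j : ℕ) + 1 then μ
      else if (j : ℕ) = (i : ℕ) + 1 then -μ
      else 0)
    (δ d : ℕ → ℝ)
    (hδ1 : δ 1 = 2)
    (hδrec : ∀ j : ℕ, 2 ≤ j → j ≤ n → δ j = 2 * j + μ ^ 2 / δ (j - 1))
    (hdn : d n = 2 * n)
    (hdrec : ∀ j : ℕ, 1 ≤ j → j < n → d j = 2 * j + μ ^ 2 / d (j + 1))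
    (hδpos : ∀ j : ℕ, 1 ≤ j → j ≤ n → 0 < δ j)
    (hdpos : ∀ j : ℕ, 1 ≤ j → j ≤ n → 0 < d j) :
    IsUnit T ∧
    ∀ i j : Fin n,
      T⁻¹ i j =
        if (i : ℕ) ≤ j then
          μ ^ ((j : ℕ) - i) * (∏ l ∈ Finset.Icc ((j : ℕ) + 2) n, d l) /
            ∏ l ∈ Finset.Icc ((i : ℕ) + 1) n, δ l
        else
          (-1 : ℝ) ^ ((i : ℕ) + (j : ℕ)) * μ ^ ((i : ℕ) - j) *
            (∏ l ∈ Finset.Icc ((i : ℕ) + 2) n, d l) /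
            ∏ l ∈ Finset.Icc ((j : ℕ) + 1) n, δ l := by
  set P : ℕ → ℝ := fun k => ∏ l ∈ Finset.Icc k n, d l with hPdef
  set Q : ℕ → ℝ := fun k => ∏ l ∈ Finset.Icc k n, δ l with hQdef
  set s : ℕ → ℕ → ℝ := fun i j =>
    if i ≤ j then μ ^ (j - i) * P (j + 2) / Q (i + 1)
    else (-1 : ℝ) ^ (i + j) * μ ^ (i - j) * P (i + 2) / Q (j + 1) with hsdef
  set S : Matrix (Fin n) (Fin n) ℝ := Matrix.of (fun i j : Fin n => s i j) with hSdef
  -- basic positivity / nonvanishing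
  have hQpos : ∀ k, 1 ≤ k → 0 < Q k := by
    intro k hk
    refine Finset.prod_pos ?_
    intro l hl
    rw [Finset.mem_Icc] at hl
    exact hδpos l (le_trans hk hl.1) hl.2
  have hδne : ∀ k, 1 ≤ k → k ≤ n → δ k ≠ 0 := fun k h1 h2 => ne_of_gt (hδpos k h1 h2)
  have hdne : ∀ k, 1 ≤ k → k ≤ n → d k ≠ 0 := fun k h1 h2 => ne_of_gt (hdpos k h1 h2)
  have hQne : ∀ k, 1 ≤ k → Q k ≠ 0 := fun k hk => ne_of_gt (hQpos k hk)
  have hQs : ∀ k, k ≤ n → Q k = δ k * Q (k + 1) := by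
    intro k hk
    simp only [hQdef]
    rw [← Finset.Ico_add_one_right_eq_Icc, Finset.prod_eq_prod_Ico_succ_bot (by omega), Finset.Ico_add_one_right_eq_Icc]
  have hPs : ∀ k, k ≤ n → P k = d k * P (k + 1) := by
    intro k hk
    simp only [hPdef]
    rw [← Finset.Ico_add_one_right_eq_Icc, Finset.prod_eq_prod_Ico_succ_bot (by omega), Finset.Ico_add_one_right_eq_Icc]
  have hQtop : ∀ k, n < k → Q k = 1 := by
    intro k hk; rw [hQdef]; simp [Finset.Icc_eq_empty_of_lt hk]
  have hPtop : ∀ k, n < k → P k = 1 := by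
    intro k hk; rw [hPdef]; simp [Finset.Icc_eq_empty_of_lt hk]
  -- the d-side three-term identity
  have dP : ∀ m : ℕ, 1 ≤ m → m < n → P m = 2 * m * P (m + 1) + μ ^ 2 * P (m + 2) := by
    intro m h1 h2
    have e1 : P m = d m * P (m + 1) := hPs m (le_of_lt h2)
    have e2 : P (m + 1) = d (m + 1) * P (m + 2) := hPs (m + 1) h2
    have e3 : d m = 2 * m + μ ^ 2 / d (m + 1) := hdrec m h1 h2
    have hne : d (m + 1) ≠ 0 := hdne (m + 1) (by omega) h2
    rw [e1, e3, e2]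
    field_simp
  -- cross identity
  have cross : ∀ t m : ℕ, 1 ≤ m → m + t = n - 1 →
      δ m * P (m + 1) + μ ^ 2 * P (m + 2) = Q m := by
    intro t
    induction t with
    | zero =>
      intro m h1 hmn
      have hm : m + 1 = n := by omega
      have e1 : P (m + 1) = d (m + 1) * P (m + 2) := hPs (m + 1) (by omega)
      have hp2 : P (m + 2) = 1 := hPtop _ (by omega)
      have hd : d (m + 1) = 2 * ((m : ℝ) + 1) := by
        rw [hm, hdn, ← hm]; push_cast; ring
      have hQm : Q m = δ m * Q (m + 1) := hQs m (by omega)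
      have hQm1 : Q (m + 1) = δ (m + 1) * Q (m + 2) := hQs (m + 1) (by omega)
      have hq2 : Q (m + 2) = 1 := hQtop _ (by omega)
      have hδm1 : δ (m + 1) = 2 * ((m : ℝ) + 1) + μ ^ 2 / δ m := by
        have := hδrec (m + 1) (by omega) (by omega)
        simpa using this
      have hδmne : δ m ≠ 0 := hδne m h1 (by omega)
      rw [e1, hp2, hQm, hQm1, hq2, hδm1, hd]
      field_simp
    | succ t ih =>
      intro m h1 hmn
      have ihm := ih (m + 1) (by omega) (by omega)
      have e1 : P (m + 1) = d (m + 1) * P (m + 2) := hPs _ (by omega)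
      have e2 : P (m + 2) = d (m + 2) * P (m + 3) := hPs _ (by omega)
      have hQm : Q m = δ m * Q (m + 1) := hQs m (by omega)
      have hδ : δ (m + 1) = 2 * ((m : ℝ) + 1) + μ ^ 2 / δ m := by
        have := hδrec (m + 1) (by omega) (by omega)
        simpa using this
      have hdm : d (m + 1) = 2 * ((m : ℝ) + 1) + μ ^ 2 / d (m + 2) := by
        have := hdrec (m + 1) (by omega) (by omega)
        simpa using this
      have hδmne : δ m ≠ 0 := hδne m h1 (by omega)
      have hdne2 : d (m + 2) ≠ 0 := hdne (m + 2) (by omega) (by omega)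
      rw [hQm, ← ihm, e1, hδ, hdm, e2]
      field_simp
      ring
  -- main per-row computation
  have main : ∀ a b : ℕ, a < n → b < n →
      (if 1 ≤ a then μ * s (a - 1) b else 0) + 2 * ((a : ℝ) + 1) * s a b +
        (if a + 1 < n then -μ * s (a + 1) b else 0) = if a = b then 1 else 0 := by
    intro a b ha hb
    rcases lt_trichotomy a b with hab | rfl | hab
    · -- Case A : a < b
      rw [if_neg (by omega : ¬ a = b), if_pos (by omega : a + 1 < n)]
      obtain ⟨c, rfl⟩ : ∃ c, b = a + 1 + c := ⟨b - a - 1, by omega⟩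
      have s2 : s a (a + 1 + c) = μ ^ (c + 1) * P (a + c + 3) / Q (a + 1) := by
        simp only [hsdef]
        rw [if_pos (by omega)]
        rw [show a + 1 + c - a = c + 1 by omega, show a + 1 + c + 2 = a + c + 3 by omega]
      have s3 : s (a + 1) (a + 1 + c) = μ ^ c * P (a + c + 3) / Q (a + 2) := by
        simp only [hsdef]
        rw [if_pos (by omega)]
        rw [show a + 1 + c - (a + 1) = c by omega, show a + 1 + c + 2 = a + c + 3 by omega]
      by_cases ha1 : 1 ≤ a
      · rw [if_pos ha1]
        have s1 : s (a - 1) (a + 1 + c) = μ ^ (c + 2) * P (a + c + 3) / Q a := by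
          simp only [hsdef]
          rw [if_pos (by omega)]
          rw [show a + 1 + c - (a - 1) = c + 2 by omega,
            show a + 1 + c + 2 = a + c + 3 by omega, show a - 1 + 1 = a by omega]
        rw [s1, s2, s3]
        have hQa : Q a = δ a * Q (a + 1) := hQs a (by omega)
        have hQa1 : Q (a + 1) = δ (a + 1) * Q (a + 2) := hQs (a + 1) (by omega)
        have key : δ (a + 1) * δ a = 2 * ((a : ℝ) + 1) * δ a + μ ^ 2 := by
          have h : δ (a + 1) = 2 * ((a : ℝ) + 1) + μ ^ 2 / δ a := by
            simpa using hδrec (a + 1) (by omega) (by omega)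
          have h1 : δ a ≠ 0 := hδne a ha1 (by omega)
          rw [h]
          field_simp
          try ring
        have h1 : δ a ≠ 0 := hδne a ha1 (by omega)
        have h2 : δ (a + 1) ≠ 0 := hδne (a + 1) (by omega) (by omega)
        have h3 : Q (a + 2) ≠ 0 := hQne _ (by omega)
        rw [hQa, hQa1]
        field_simp
        linear_combination (-(μ ^ (c + 1) * P (a + c + 3))) * key
      · have ha0 : a = 0 := by omega
        subst ha0
        rw [if_neg ha1, s2, s3]
        have hQ1 : Q 1 = δ 1 * Q 2 := hQs 1 (by omega)
        have h3 : Q 2 ≠ 0 := hQne _ (by omega)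
        rw [hQ1, hδ1]
        push_cast
        field_simp
        ring
    · -- Case B : a = b
      rw [if_pos rfl]
      have s2 : s a a = P (a + 2) / Q (a + 1) := by
        simp only [hsdef]
        rw [if_pos le_rfl, Nat.sub_self, pow_zero, one_mul]
      by_cases h2 : a + 1 < n
      · have s3 : s (a + 1) a = -(μ * P (a + 3) / Q (a + 1)) := by
          simp only [hsdef]
          rw [if_neg (by omega)]
          rw [show a + 1 - a = 1 by omega, show a + 1 + 2 = a + 3 by omega,
            show a + 1 + a = 2 * a + 1 by omega, pow_succ, pow_mul, neg_one_sq, one_pow, pow_one]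
          ring
        have hcross := cross (n - a - 2) (a + 1) (by omega) (by omega)
        rw [if_pos h2, s2, s3]
        by_cases ha1 : 1 ≤ a
        · rw [if_pos ha1]
          have s1 : s (a - 1) a = μ * P (a + 2) / Q a := by
            simp only [hsdef]
            rw [if_pos (by omega)]
            rw [show a - (a - 1) = 1 by omega, show a - 1 + 1 = a by omega, pow_one]
          rw [s1]
          have hQa : Q a = δ a * Q (a + 1) := hQs a (by omega)
          have key : δ (a + 1) * δ a = 2 * ((a : ℝ) + 1) * δ a + μ ^ 2 := by
            have h : δ (a + 1) = 2 * ((a : ℝ) + 1) + μ ^ 2 / δ a := by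
              simpa using hδrec (a + 1) (by omega) (by omega)
            have h1 : δ a ≠ 0 := hδne a ha1 (by omega)
            rw [h]
            field_simp
            try ring
          have h1 : δ a ≠ 0 := hδne a ha1 (by omega)
          have h3 : Q (a + 1) ≠ 0 := hQne _ (by omega)
          rw [hQa]
          field_simp
          linear_combination (δ a) * hcross - (P (a + 2)) * key
        · have ha0 : a = 0 := by omega
          subst ha0
          rw [if_neg ha1]
          have h3 : Q 1 ≠ 0 := hQne _ (by omega)
          rw [hδ1] at hcross
          field_simp
          linear_combination hcross
      · -- a + 1 = n
        have hn : a + 1 = n := by omega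
        have ha1 : 1 ≤ a ∨ a = 0 := by omega
        have hp2 : P (a + 2) = 1 := hPtop _ (by omega)
        have hq2 : Q (a + 2) = 1 := hQtop _ (by omega)
        have hQa1 : Q (a + 1) = δ (a + 1) * Q (a + 2) := hQs (a + 1) (by omega)
        rw [if_neg h2, s2, hp2]
        rcases ha1 with ha1 | ha0
        · rw [if_pos ha1]
          have s1 : s (a - 1) a = μ * P (a + 2) / Q a := by
            simp only [hsdef]
            rw [if_pos (by omega)]
            rw [show a - (a - 1) = 1 by omega, show a - 1 + 1 = a by omega, pow_one]
          rw [s1, hp2]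
          have hQa : Q a = δ a * Q (a + 1) := hQs a (by omega)
          have key : δ (a + 1) * δ a = 2 * ((a : ℝ) + 1) * δ a + μ ^ 2 := by
            have h : δ (a + 1) = 2 * ((a : ℝ) + 1) + μ ^ 2 / δ a := by
              simpa using hδrec (a + 1) (by omega) (by omega)
            have h1 : δ a ≠ 0 := hδne a ha1 (by omega)
            rw [h]
            field_simp
            try ring
          have h1 : δ a ≠ 0 := hδne a ha1 (by omega)
          have h2' : δ (a + 1) ≠ 0 := hδne (a + 1) (by omega) (by omega)
          rw [hQa, hQa1, hq2]
          field_simp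
          linear_combination (-1 : ℝ) * key
        · subst ha0
          have hn1 : n = 1 := by omega
          rw [hQa1, hq2, hδ1]
          norm_num
    · -- Case C : a > b
      rw [if_neg (by omega : ¬ a = b)]
      obtain ⟨c, rfl⟩ : ∃ c, a = b + 1 + c := ⟨a - b - 1, by omega⟩
      rw [if_pos (by omega : 1 ≤ b + 1 + c)]
      have s1 : s (b + 1 + c - 1) b = (-1 : ℝ) ^ c * μ ^ c * P (b + c + 2) / Q (b + 1) := by
        rw [show b + 1 + c - 1 = b + c by omega]
        simp only [hsdef]
        by_cases hc : c = 0
        · subst hc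
          rw [if_pos (by omega)]
          simp
        · rw [if_neg (by omega)]
          rw [show b + c - b = c by omega, show b + c + 2 = b + c + 2 by omega,
            show b + c + b = 2 * b + c by omega, pow_add, pow_mul, neg_one_sq, one_pow, one_mul]
      have s2 : s (b + 1 + c) b = -((-1 : ℝ) ^ c * μ ^ (c + 1) * P (b + c + 3) / Q (b + 1)) := by
        simp only [hsdef]
        rw [if_neg (by omega)]
        rw [show b + 1 + c - b = c + 1 by omega, show b + 1 + c + 2 = b + c + 3 by omega,
          show b + 1 + c + b = 2 * b + (c + 1) by omega, pow_add, pow_mul, neg_one_sq, one_pow,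
          one_mul, pow_succ]
        ring
      rw [s1, s2]
      have h3 : Q (b + 1) ≠ 0 := hQne _ (by omega)
      by_cases hn : b + 1 + c + 1 < n
      · have s3 : s (b + 1 + c + 1) b
            = (-1 : ℝ) ^ c * μ ^ (c + 2) * P (b + c + 4) / Q (b + 1) := by
          simp only [hsdef]
          rw [if_neg (by omega)]
          rw [show b + 1 + c + 1 - b = c + 2 by omega, show b + 1 + c + 1 + 2 = b + c + 4 by omega,
            show b + 1 + c + 1 + b = 2 * (b + 1) + c by omega, pow_add, pow_mul, neg_one_sq,
            one_pow, one_mul]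
        rw [if_pos hn, s3]
        have hdP := dP (b + c + 2) (by omega) (by omega)
        rw [show b + c + 2 + 1 = b + c + 3 by omega, show b + c + 2 + 2 = b + c + 4 by omega] at hdP
        push_cast at hdP ⊢
        field_simp
        linear_combination ((-1 : ℝ) ^ c * μ ^ (c + 1)) * hdP
      · rw [if_neg hn]
        have hen : b + c + 2 = n := by omega
        have hp3 : P (b + c + 3) = 1 := hPtop _ (by omega)
        have hp2 : P (b + c + 2) = 2 * ((b : ℝ) + c + 2) := by
          have e1 : P (b + c + 2) = d (b + c + 2) * P (b + c + 3) := hPs _ (by omega)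
          rw [e1, hp3, hen, hdn, ← hen]
          push_cast
          ring
        rw [hp2, hp3]
        push_cast
        field_simp
        ring
  have hTS : T * S = 1 := by
    ext i j
    rw [Matrix.mul_apply, Matrix.one_apply]
    have hsum : ∀ k : Fin n, T i k * S k j =
        (if k = i then (2 * ((i : ℕ) + 1) : ℝ) * s k j else 0)
      + (if (k : ℕ) + 1 = (i : ℕ) then μ * s k j else 0)
      + (if (k : ℕ) = (i : ℕ) + 1 then -μ * s k j else 0) := by
      intro k
      rw [hT]
      have hS : S k j = s k j := rfl
      rw [hS]
      by_cases h1 : (i : ℕ) = (k : ℕ)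
      · have hk : k = i := by exact Fin.ext h1.symm
        subst hk
        simp [h1]
      · have hk : ¬ (k = i) := fun h => h1 (by rw [h])
        rw [if_neg (by omega : ¬ (i : ℕ) = (k : ℕ)), if_neg hk]
        by_cases h2 : (i : ℕ) = (k : ℕ) + 1
        · rw [if_pos h2, if_pos h2.symm, if_neg (by omega)]; ring
        · rw [if_neg h2, if_neg (by omega : ¬ (k : ℕ) + 1 = (i : ℕ))]
          by_cases h3 : (k : ℕ) = (i : ℕ) + 1
          · rw [if_pos h3, if_pos h3]; ring
          · rw [if_neg h3, if_neg h3]; ring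
    rw [Finset.sum_congr rfl (fun k _ => hsum k)]
    rw [Finset.sum_add_distrib, Finset.sum_add_distrib]
    have e1 : ∑ k : Fin n, (if k = i then (2 * ((i : ℕ) + 1) : ℝ) * s k j else 0)
        = 2 * ((i : ℕ) + 1) * s i j := by
      rw [Finset.sum_ite_eq' Finset.univ i]; simp
    have e2 : ∑ k : Fin n, (if (k : ℕ) + 1 = (i : ℕ) then μ * s k j else 0)
        = if 1 ≤ (i : ℕ) then μ * s ((i : ℕ) - 1) (j : ℕ) else 0 := by
      by_cases hi : 1 ≤ (i : ℕ)
      · rw [if_pos hi]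
        have key : ∀ k : Fin n, ((k : ℕ) + 1 = (i : ℕ)) ↔ k = (⟨(i : ℕ) - 1, by omega⟩ : Fin n) := by
          intro k; simp only [Fin.ext_iff, Fin.val_mk]; omega
        calc ∑ k : Fin n, (if (k : ℕ) + 1 = (i : ℕ) then μ * s k j else 0)
            = ∑ k : Fin n, (if k = (⟨(i : ℕ) - 1, by omega⟩ : Fin n) then μ * s k j else 0) := by
              refine Finset.sum_congr rfl fun k _ => ?_
              rw [if_congr (key k) rfl rfl]
          _ = μ * s ((i : ℕ) - 1) (j : ℕ) := by
              rw [Finset.sum_ite_eq' Finset.univ]; simp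
      · rw [if_neg hi]
        refine Finset.sum_eq_zero fun k _ => ?_
        rw [if_neg (by omega)]
    have e3 : ∑ k : Fin n, (if (k : ℕ) = (i : ℕ) + 1 then -μ * s k j else 0)
        = if (i : ℕ) + 1 < n then -μ * s ((i : ℕ) + 1) (j : ℕ) else 0 := by
      by_cases hi : (i : ℕ) + 1 < n
      · rw [if_pos hi]
        have key : ∀ k : Fin n, ((k : ℕ) = (i : ℕ) + 1) ↔ k = (⟨(i : ℕ) + 1, hi⟩ : Fin n) := by
          intro k; simp only [Fin.ext_iff, Fin.val_mk]
        calc ∑ k : Fin n, (if (k : ℕ) = (i : ℕ) + 1 then -μ * s k j else 0)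
            = ∑ k : Fin n, (if k = (⟨(i : ℕ) + 1, hi⟩ : Fin n) then -μ * s k j else 0) := by
              refine Finset.sum_congr rfl fun k _ => ?_
              rw [if_congr (key k) rfl rfl]
          _ = -μ * s ((i : ℕ) + 1) (j : ℕ) := by
              rw [Finset.sum_ite_eq' Finset.univ]; simp
      · rw [if_neg hi]
        refine Finset.sum_eq_zero fun k _ => ?_
        rw [if_neg (by omega)]
    rw [e1, e2, e3]
    have := main (i : ℕ) (j : ℕ) i.isLt j.isLt
    have hgoal : (if i = j then (1:ℝ) else 0) = if (i:ℕ) = (j:ℕ) then 1 else 0 := by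
      simp [Fin.ext_iff]
    rw [hgoal]
    linarith [this]
  have hST : S * T = 1 := mul_eq_one_comm.mp hTS
  refine ⟨⟨⟨T, S, hTS, hST⟩, rfl⟩, ?_⟩
  intro i j
  rw [Matrix.inv_eq_right_inv hTS]
  simp only [hSdef, Matrix.of_apply, hsdef, hPdef, hQdef]
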